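/- Symmetric-pairs inequality for the bounded line: let p > 0, q^L, q^R > 0, set q := q^L + q^R, let M ≥ 2 be an integer, and assume q^L ≠ j·p, q^R ≠ j·p and q ≠ j·p for every integer 1 ≤ j ≤ M−1. Then for every integer 1 ≤ k ≤ M, writing k̃ := M+1−k, and for every t > 0: S_circle(t; p, q, k) + S_circle(t; p, q, k̃) > e^{pt} · ( S_circle(t; p, q^L, k) · S_circle(t; p, q^R, k̃) + S_circle(t; p, q^L, k̃) · S_circle(t; p, q^R, k) ). -/

import Mathlib

/-- The coefficient `c_{M−k}` of the explicit circle formula, as a function of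
`k` (so `dcoef p q k = c_{M−k}`; this is independent of `M`), defined by the
backward recursion
`c_{M−k} = 1 − q^k/∏_{j=1}^{k}(q−jp) − Σ_{j=1}^{k−1} (p^{j−k}(−q)^{k−j}/(k−j)!)·c_{M−j}`. -/
noncomputable def dcoef (p q : ℝ) : ℕ → ℝ
  | k =>
    1 - q ^ k / (∏ j ∈ Finset.Icc 1 k, (q - (j : ℝ) * p)) -
      ∑ j ∈ (Finset.Ico 1 k).attach,
        (p ^ ((j.1 : ℤ) - (k : ℤ)) * (-q) ^ (k - j.1) / (Nat.factorial (k - j.1)) *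
          dcoef p q j.1)
  decreasing_by exact (Finset.mem_Ico.mp j.2).2

/-- Nonadoption probability of a node in the discrete Bass model on a one-sided
homogeneous circle with `M` nodes, external rate `p` and internal rate `q`:
`S_circle(t;p,q,M) = Σ_{k=1}^{M−1} c_k (−q)^{k−1}/(p^{k−1}(k−1)!) e^{(−kp−q)t}
                     + (−q)^{M−1}/∏_{j=1}^{M−1}(jp−q) · e^{−Mpt}`,
where `c_k = dcoef p q (M−k)`. -/
noncomputable def Scircle (t p q : ℝ) (M : ℕ) : ℝ :=
  (∑ k ∈ Finset.Icc 1 (M - 1),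
      dcoef p q (M - k) * ((-q) ^ (k - 1) / (p ^ (k - 1) * Nat.factorial (k - 1))) *
        Real.exp ((-(k : ℝ) * p - q) * t)) +
    ((-q) ^ (M - 1) / (∏ j ∈ Finset.Icc 1 (M - 1), ((j : ℝ) * p - q))) *
      Real.exp (-(M : ℝ) * p * t)

/-- Symmetric-pairs inequality for the bounded line: for `p > 0`,
`q^L, q^R > 0`, `q := q^L + q^R`, `M ≥ 2`, under the nondegeneracy conditions,
for every `1 ≤ k ≤ M` with `k̃ := M+1−k` and every `t > 0`,
`S_circle(t;p,q,k) + S_circle(t;p,q,k̃) >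
  e^{pt}·(S_circle(t;p,q^L,k)·S_circle(t;p,q^R,k̃)
          + S_circle(t;p,q^L,k̃)·S_circle(t;p,q^R,k))`. -/
lemma Scircle_zero_nodes (t p q : ℝ) : Scircle t p q 0 = 1 := by simp [Scircle]

lemma Scircle_one (t p q : ℝ) : Scircle t p q 1 = Real.exp (-(p * t)) := by simp [Scircle]

-- raw derivative
lemma Scircle_hasDerivAt_raw (p q t : ℝ) (N : ℕ) :
    HasDerivAt (fun s => Scircle s p q N)
      ((∑ k ∈ Finset.Icc 1 (N - 1),
        dcoef p q (N - k) * ((-q) ^ (k - 1) / (p ^ (k - 1) * Nat.factorial (k - 1))) *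
          ((-(k : ℝ) * p - q) * Real.exp ((-(k : ℝ) * p - q) * t))) +
      ((-q) ^ (N - 1) / (∏ j ∈ Finset.Icc 1 (N - 1), ((j : ℝ) * p - q))) *
        (-(N : ℝ) * p * Real.exp (-(N : ℝ) * p * t))) t := by
  unfold Scircle
  apply HasDerivAt.add
  · apply HasDerivAt.fun_sum
    intro k _
    apply HasDerivAt.const_mul
    simpa [mul_comm] using ((hasDerivAt_id t).const_mul (-(k : ℝ) * p - q)).exp
  · apply HasDerivAt.const_mul
    simpa [mul_comm] using ((hasDerivAt_id t).const_mul (-(N : ℝ) * p)).exp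

open Finset in
lemma Scircle_ode (p q t : ℝ) (hp : p ≠ 0) (M : ℕ)
    (hq : ∀ j : ℕ, 1 ≤ j → j ≤ M → q ≠ (j : ℝ) * p) :
    HasDerivAt (fun s => Scircle s p q (M + 1))
      (-((p + q) * Scircle t p q (M + 1)) + q * Real.exp (-(p * t)) * Scircle t p q M) t := by
  have hraw := Scircle_hasDerivAt_raw p q t (M + 1)
  convert hraw using 1
  rcases Nat.eq_zero_or_pos M with rfl | hM
  · simp only [Scircle_zero_nodes, Scircle_one, Scircle]
    norm_num
    ring
  have hM1 : M - 1 + 1 = M := Nat.succ_pred_eq_of_pos hM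
  unfold Scircle
  simp only [Nat.add_sub_cancel]
  set A : ℕ → ℝ := fun k => dcoef p q (M + 1 - k) *
      ((-q) ^ (k - 1) / (p ^ (k - 1) * Nat.factorial (k - 1))) with hA
  set A' : ℕ → ℝ := fun k => dcoef p q (M - k) *
      ((-q) ^ (k - 1) / (p ^ (k - 1) * Nat.factorial (k - 1))) with hA'
  set e : ℕ → ℝ := fun k => Real.exp ((-(k : ℝ) * p - q) * t) with he
  have sumEq : ∑ k ∈ Icc 1 M, (A k * ((-(k : ℝ) * p - q) * e k) + (p + q) * (A k * e k))
      = q * Real.exp (-(p * t)) * ∑ k ∈ Icc 1 (M - 1), A' k * e k := by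
    have step1 : ∀ k ∈ Icc 1 M,
        A k * ((-(k : ℝ) * p - q) * e k) + (p + q) * (A k * e k)
          = A k * e k * (((1 : ℝ) - k) * p) := by
      intro k _; ring
    rw [Finset.sum_congr rfl step1, Finset.mul_sum]
    rw [← Finset.sum_subset (Finset.Icc_subset_Icc_left (by norm_num : 1 ≤ 2))
      (fun x hx hnx => ?_)]
    swap
    · have : x = 1 := by simp only [Finset.mem_Icc] at hx hnx; omega
      subst this; norm_num
    apply Finset.sum_nbij' (i := fun k => k - 1) (j := fun k => k + 1)
    · intro a ha; simp only [Finset.mem_Icc] at ha ⊢; omega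
    · intro a ha; simp only [Finset.mem_Icc] at ha ⊢; omega
    · intro a ha; simp only [Finset.mem_Icc] at ha; omega
    · intro a ha; simp only [Finset.mem_Icc] at ha; omega
    · intro k hk
      simp only [Finset.mem_Icc] at hk
      obtain ⟨i, rfl⟩ : ∃ i, k = i + 2 := ⟨k - 2, by omega⟩
      have h3 : M + 1 - (i + 2) = M - (i + 1) := by omega
      rw [hA, hA', he]
      simp only [show i + 2 - 1 = i + 1 from rfl, show i + 1 - 1 = i from rfl, h3]
      have hexp : Real.exp ((-((i:ℝ) + 2) * p - q) * t)
          = Real.exp (-(p * t)) * Real.exp ((-((i:ℝ) + 1) * p - q) * t) := by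
        rw [← Real.exp_add]; ring_nf
      push_cast
      rw [hexp]
      have hfac : (Nat.factorial (i + 1) : ℝ) = (i + 1) * Nat.factorial i := by
        rw [Nat.factorial_succ]; push_cast; ring
      have hfne : (Nat.factorial i : ℝ) ≠ 0 := Nat.cast_ne_zero.mpr (Nat.factorial_ne_zero i)
      rw [hfac, pow_succ (-q) i, pow_succ p i]
      field_simp
      ring
  -- product (boundary) term identity
  have hprod : ∏ j ∈ Icc 1 M, ((j : ℝ) * p - q)
      = (∏ j ∈ Icc 1 (M - 1), ((j : ℝ) * p - q)) * ((M : ℝ) * p - q) := by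
    conv_lhs => rw [← hM1]
    rw [Finset.prod_Icc_succ_top (by omega : 1 ≤ M - 1 + 1)]
    rw [hM1]
  have hMq : (M : ℝ) * p - q ≠ 0 := fun h => (hq M (by omega) le_rfl) (by linarith)
  have hPne : (∏ j ∈ Icc 1 (M - 1), ((j : ℝ) * p - q)) ≠ 0 := by
    apply Finset.prod_ne_zero_iff.mpr
    intro j hj
    simp only [Finset.mem_Icc] at hj
    exact fun h => (hq j hj.1 (by omega)) (by linarith)
  have hpow : (-q) ^ M = (-q) ^ (M - 1) * (-q) := by
    conv_lhs => rw [← hM1]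
    rw [pow_succ]
  have prodEq : (-q) ^ M / (∏ j ∈ Icc 1 M, ((j : ℝ) * p - q)) *
        (-((M : ℝ) + 1) * p * Real.exp (-((M : ℝ) + 1) * p * t))
        + (p + q) * ((-q) ^ M / (∏ j ∈ Icc 1 M, ((j : ℝ) * p - q)) *
            Real.exp (-((M : ℝ) + 1) * p * t))
      = q * Real.exp (-(p * t)) * ((-q) ^ (M - 1) / (∏ j ∈ Icc 1 (M - 1), ((j : ℝ) * p - q)) *
          Real.exp (-(M : ℝ) * p * t)) := by
    have hexp : Real.exp (-((M : ℝ) + 1) * p * t) = Real.exp (-(p * t)) * Real.exp (-(M : ℝ) * p * t) := by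
      rw [← Real.exp_add]; ring_nf
    rw [hexp, hprod, hpow]
    generalize (∏ j ∈ Icc 1 (M - 1), ((j : ℝ) * p - q)) = X at hPne ⊢
    field_simp
    ring
  -- assemble
  simp only [hA, hA', he] at sumEq prodEq
  rw [Finset.sum_add_distrib, ← Finset.mul_sum] at sumEq
  push_cast at sumEq prodEq ⊢
  have sumEq2 := eq_sub_of_add_eq sumEq
  have prodEq2 := eq_sub_of_add_eq prodEq
  rw [sumEq2, prodEq2]
  ring

open Finset in
lemma Scircle_init (p q : ℝ) (M : ℕ) : Scircle 0 p q M = 1 := by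
  rcases Nat.eq_zero_or_pos M with rfl | hM
  · simp [Scircle]
  rcases Nat.lt_or_ge M 2 with hM2 | hM2
  · interval_cases M
    simp [Scircle]
  -- M ≥ 2
  unfold Scircle
  simp only [mul_zero, Real.exp_zero, mul_one]
  -- the D-term equals q^(M-1) / ∏ (q - j p)
  have hD : ((-q) ^ (M - 1) / (∏ j ∈ Finset.Icc 1 (M - 1), ((j : ℝ) * p - q)))
      = q ^ (M - 1) / (∏ j ∈ Finset.Icc 1 (M - 1), (q - (j : ℝ) * p)) := by
    have h1 : (∏ j ∈ Finset.Icc 1 (M - 1), ((j : ℝ) * p - q))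
        = (-1 : ℝ) ^ (M - 1) * ∏ j ∈ Finset.Icc 1 (M - 1), (q - (j : ℝ) * p) := by
      calc (∏ j ∈ Finset.Icc 1 (M - 1), ((j : ℝ) * p - q))
          = ∏ j ∈ Finset.Icc 1 (M - 1), ((-1 : ℝ) * (q - (j : ℝ) * p)) :=
            Finset.prod_congr rfl (fun j _ => by ring)
        _ = (∏ _j ∈ Finset.Icc 1 (M - 1), (-1 : ℝ)) *
              ∏ j ∈ Finset.Icc 1 (M - 1), (q - (j : ℝ) * p) := Finset.prod_mul_distrib
        _ = (-1 : ℝ) ^ (M - 1) * ∏ j ∈ Finset.Icc 1 (M - 1), (q - (j : ℝ) * p) := by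
            rw [Finset.prod_const, Nat.card_Icc]; norm_num
    have h2 : (-q : ℝ) ^ (M - 1) = (-1 : ℝ) ^ (M - 1) * q ^ (M - 1) := by
      rw [neg_pow]
    rw [h1, h2, mul_div_mul_left]
    positivity
  rw [hD]
  -- split off the k = 1 term of the sum
  have h1mem : (1 : ℕ) ∈ Finset.Icc 1 (M - 1) := by
    simp only [Finset.mem_Icc]; omega
  rw [← Finset.add_sum_erase _ _ h1mem]
  have herase : Finset.Icc 1 (M-1) \ {1} = Finset.Icc 2 (M-1) := by
    ext x
    simp only [Finset.mem_sdiff, Finset.mem_Icc, Finset.mem_singleton]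
    omega
  rw [Finset.erase_eq, herase]
  simp only [Nat.sub_self, pow_zero, Nat.factorial_zero, Nat.cast_one, mul_one, one_div,
    inv_one, mul_one]
  -- now unfold dcoef (M-1)
  rw [dcoef]
  have hrec : ∑ j ∈ (Finset.Ico 1 (M-1)).attach,
        (p ^ ((j.1 : ℤ) - ((M-1 : ℕ) : ℤ)) * (-q) ^ ((M-1) - j.1) / (Nat.factorial ((M-1) - j.1)) *
          dcoef p q j.1)
      = ∑ k ∈ Finset.Icc 2 (M-1),
          dcoef p q (M - k) * ((-q) ^ (k - 1) / (p ^ (k - 1) * Nat.factorial (k - 1))) := by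
    rw [Finset.sum_attach (Finset.Ico 1 (M-1))
      (fun j => p ^ ((j : ℤ) - ((M-1 : ℕ) : ℤ)) * (-q) ^ ((M-1) - j) / (Nat.factorial ((M-1) - j)) *
          dcoef p q j)]
    apply Finset.sum_nbij' (i := fun j => M - j) (j := fun k => M - k)
    · intro a ha; simp only [Finset.mem_Ico, Finset.mem_Icc] at ha ⊢; omega
    · intro a ha; simp only [Finset.mem_Ico, Finset.mem_Icc] at ha ⊢; omega
    · intro a ha; simp only [Finset.mem_Ico] at ha; omega
    · intro a ha; simp only [Finset.mem_Icc] at ha; omega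
    · intro j hj
      simp only [Finset.mem_Ico] at hj
      -- j ranges in [1, M-2]; the image is k = M - j ∈ [2, M-1]
      have e1 : M - 1 - j = (M - j) - 1 := by omega
      have e2 : ((j : ℤ) - ((M-1 : ℕ) : ℤ)) = -(((M - j - 1 : ℕ) : ℤ)) := by
        push_cast; omega
      have e3 : M - (M - j) = j := by omega
      rw [e1, e2, e3, zpow_neg, zpow_natCast]
      ring
  rw [hrec]
  ring

-- Gronwall-type lemmas
lemma gron_aux (c : ℝ) (F h : ℝ → ℝ)
    (hd : ∀ t, HasDerivAt F (-(c * F t) + h t) t) :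
    ∀ s, HasDerivAt (fun s => Real.exp (c * s) * F s) (Real.exp (c * s) * h s) s := by
  intro s
  have h1 : HasDerivAt (fun s : ℝ => Real.exp (c * s)) (c * Real.exp (c * s)) s := by
    simpa [mul_comm] using ((hasDerivAt_id s).const_mul c).exp
  have := h1.fun_mul (hd s)
  refine (this.congr_deriv ?_).congr_deriv rfl
  symm
  ring

lemma gron_nonneg (c : ℝ) (F h : ℝ → ℝ) (hF0 : F 0 = 0)
    (hd : ∀ t, HasDerivAt F (-(c * F t) + h t) t)
    (hh : ∀ t, 0 ≤ t → 0 ≤ h t) : ∀ t, 0 ≤ t → 0 ≤ F t := by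
  intro t ht
  have hdu := gron_aux c F h hd
  set u : ℝ → ℝ := fun s => Real.exp (c * s) * F s with hu
  have hmono : MonotoneOn u (Set.Ici 0) := by
    apply monotoneOn_of_deriv_nonneg (convex_Ici 0)
    · exact fun x _ => ((hdu x).differentiableAt.continuousAt).continuousWithinAt
    · exact fun x _ => (hdu x).differentiableAt.differentiableWithinAt
    · intro x hx
      rw [(hdu x).deriv]
      rw [interior_Ici] at hx
      exact mul_nonneg (Real.exp_pos _).le (hh x (le_of_lt hx))
  have h0 : u 0 ≤ u t := hmono Set.self_mem_Ici ht ht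
  have hu0 : u 0 = 0 := by simp [hu, hF0]
  rw [hu0] at h0
  have he := Real.exp_pos (c * t)
  have : u t = Real.exp (c * t) * F t := rfl
  nlinarith [h0]

lemma gron_pos (c : ℝ) (F h : ℝ → ℝ) (hF0 : F 0 = 0)
    (hd : ∀ t, HasDerivAt F (-(c * F t) + h t) t)
    (hh : ∀ t, 0 < t → 0 < h t) : ∀ t, 0 < t → 0 < F t := by
  intro t ht
  have hdu := gron_aux c F h hd
  set u : ℝ → ℝ := fun s => Real.exp (c * s) * F s with hu
  have hmono : StrictMonoOn u (Set.Ici 0) := by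
    apply strictMonoOn_of_deriv_pos (convex_Ici 0)
    · exact fun x _ => ((hdu x).differentiableAt.continuousAt).continuousWithinAt
    · intro x hx
      rw [(hdu x).deriv]
      rw [interior_Ici] at hx
      exact mul_pos (Real.exp_pos _) (hh x hx)
  have h0 : u 0 < u t := hmono Set.self_mem_Ici (le_of_lt ht) ht
  have hu0 : u 0 = 0 := by simp [hu, hF0]
  rw [hu0] at h0
  have he := Real.exp_pos (c * t)
  have : u t = Real.exp (c * t) * F t := rfl
  nlinarith [h0]

lemma gron_pos_of_pos (c : ℝ) (F h : ℝ → ℝ) (hF0 : 0 < F 0)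
    (hd : ∀ t, HasDerivAt F (-(c * F t) + h t) t)
    (hh : ∀ t, 0 ≤ t → 0 ≤ h t) : ∀ t, 0 ≤ t → 0 < F t := by
  intro t ht
  have hdu := gron_aux c F h hd
  set u : ℝ → ℝ := fun s => Real.exp (c * s) * F s with hu
  have hmono : MonotoneOn u (Set.Ici 0) := by
    apply monotoneOn_of_deriv_nonneg (convex_Ici 0)
    · exact fun x _ => ((hdu x).differentiableAt.continuousAt).continuousWithinAt
    · exact fun x _ => (hdu x).differentiableAt.differentiableWithinAt
    · intro x hx
      rw [(hdu x).deriv]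
      rw [interior_Ici] at hx
      exact mul_nonneg (Real.exp_pos _).le (hh x (le_of_lt hx))
  have h0 : u 0 ≤ u t := hmono Set.self_mem_Ici ht ht
  have hu0 : u 0 = F 0 := by simp [hu]
  rw [hu0] at h0
  have he := Real.exp_pos (c * t)
  have : u t = Real.exp (c * t) * F t := rfl
  nlinarith [h0]

lemma Scircle_pos (p q : ℝ) (hp : 0 < p) (hq0 : 0 < q) (N : ℕ)
    (hq : ∀ j : ℕ, 1 ≤ j → j ≤ N → q ≠ (j : ℝ) * p) :
    ∀ m : ℕ, m ≤ N + 1 → ∀ t, 0 ≤ t → 0 < Scircle t p q m := by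
  intro m
  induction m with
  | zero => intro _ t _; rw [Scircle_zero_nodes]; norm_num
  | succ m ih =>
    intro hm t ht
    have hode := fun s => Scircle_ode p q s (ne_of_gt hp) m
      (fun j h1 h2 => hq j h1 (by omega))
    apply gron_pos_of_pos (p + q) (fun s => Scircle s p q (m+1))
      (fun s => q * Real.exp (-(p * s)) * Scircle s p q m) _ hode _ t ht
    · show 0 < Scircle 0 p q (m+1)
      rw [Scircle_init]; norm_num
    · intro s hs
      have := ih (by omega) s hs
      positivity

lemma Scircle_succ_le (p q : ℝ) (hp : 0 < p) (hq0 : 0 < q) (N : ℕ)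
    (hq : ∀ j : ℕ, 1 ≤ j → j ≤ N → q ≠ (j : ℝ) * p) :
    ∀ m : ℕ, m + 1 ≤ N + 1 →
      (∀ t, 0 ≤ t → Scircle t p q (m + 1) ≤ Scircle t p q m) ∧
      (∀ t, 0 < t → Scircle t p q (m + 1) < Scircle t p q m) := by
  intro m
  induction m with
  | zero =>
    intro _
    constructor
    · intro t ht
      rw [Scircle_zero_nodes, Scircle_one]
      exact Real.exp_le_one_iff.mpr (by nlinarith)
    · intro t ht
      rw [Scircle_zero_nodes, Scircle_one]
      exact Real.exp_lt_one_iff.mpr (by nlinarith)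
  | succ m ih =>
    intro hm
    obtain ⟨ihle, ihlt⟩ := ih (by omega)
    have hode1 := fun s => Scircle_ode p q s (ne_of_gt hp) m
      (fun j h1 h2 => hq j h1 (by omega))
    have hode2 := fun s => Scircle_ode p q s (ne_of_gt hp) (m + 1)
      (fun j h1 h2 => hq j h1 (by omega))
    set F : ℝ → ℝ := fun s => Scircle s p q (m + 1) - Scircle s p q (m + 1 + 1) with hF
    set h : ℝ → ℝ := fun s =>
      q * Real.exp (-(p * s)) * (Scircle s p q m - Scircle s p q (m + 1)) with hh
    have hd : ∀ s, HasDerivAt F (-((p + q) * F s) + h s) s := by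
      intro s
      have := (hode1 s).fun_sub (hode2 s)
      refine this.congr_deriv ?_
      symm
      simp only [hF, hh]
      ring
    have hF0 : F 0 = 0 := by simp [hF, Scircle_init]
    constructor
    · intro t ht
      have := gron_nonneg (p + q) F h hF0 hd (fun s hs => by
        have h1 := ihle s hs
        have he := Real.exp_pos (-(p * s))
        simp only [hh]
        exact mul_nonneg (mul_pos hq0 he).le (sub_nonneg.mpr h1)) t ht
      simp only [hF] at this
      linarith
    · intro t ht
      have := gron_pos (p + q) F h hF0 hd (fun s hs => by
        have h1 := ihlt s hs
        have he := Real.exp_pos (-(p * s))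
        simp only [hh]
        exact mul_pos (mul_pos hq0 he) (sub_pos.mpr h1)) t ht
      simp only [hF] at this
      linarith

lemma Scircle_le_exp (p q : ℝ) (hp : 0 < p) (hq0 : 0 < q) (N : ℕ)
    (hq : ∀ j : ℕ, 1 ≤ j → j ≤ N → q ≠ (j : ℝ) * p) :
    ∀ m : ℕ, 1 ≤ m → m ≤ N + 1 → ∀ t, 0 ≤ t → Scircle t p q m ≤ Real.exp (-(p * t)) := by
  intro m
  induction m with
  | zero => omega
  | succ m ih =>
    intro _ hm t ht
    rcases Nat.eq_zero_or_pos m with rfl | hm0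
    · rw [Scircle_one]
    · calc Scircle t p q (m + 1) ≤ Scircle t p q m :=
            (Scircle_succ_le p q hp hq0 N hq m (by omega)).1 t ht
        _ ≤ Real.exp (-(p * t)) := ih hm0 (by omega) t ht

noncomputable def Phi (p qL qR : ℝ) (m n : ℕ) (t : ℝ) : ℝ :=
  Scircle t p (qL + qR) m + Scircle t p (qL + qR) n -
    Real.exp (p * t) * (Scircle t p qL m * Scircle t p qR n +
      Scircle t p qL n * Scircle t p qR m)

lemma Phi_symm (p qL qR : ℝ) (m n : ℕ) (t : ℝ) :
    Phi p qL qR m n t = Phi p qL qR n m t := by unfold Phi; ring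

lemma Phi_zero (p qL qR : ℝ) (m n : ℕ) : Phi p qL qR m n 0 = 0 := by
  simp [Phi, Scircle_init]

lemma exp_mul_exp_neg (x : ℝ) : Real.exp x * Real.exp (-x) = 1 := by
  rw [← Real.exp_add]; simp

lemma Phi_one_one (p qL qR t : ℝ) : Phi p qL qR 1 1 t = 0 := by
  have hE := exp_mul_exp_neg (p * t)
  unfold Phi
  rw [Scircle_one, Scircle_one, Scircle_one]
  linear_combination (-2 * Real.exp (-(p * t))) * hE

lemma Phi_deriv (p qL qR : ℝ) (hp : p ≠ 0) (a b N : ℕ) (ha : a ≤ N) (hb : b ≤ N)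
    (hcL : ∀ j : ℕ, 1 ≤ j → j ≤ N → qL ≠ (j : ℝ) * p)
    (hcR : ∀ j : ℕ, 1 ≤ j → j ≤ N → qR ≠ (j : ℝ) * p)
    (hcS : ∀ j : ℕ, 1 ≤ j → j ≤ N → qL + qR ≠ (j : ℝ) * p) (t : ℝ) :
    HasDerivAt (Phi p qL qR (a + 1) (b + 1))
      (-((p + (qL + qR)) * Phi p qL qR (a + 1) (b + 1) t) +
        (qL * (Real.exp (-(p * t)) * (Scircle t p (qL + qR) a + Scircle t p (qL + qR) b) -
            (Scircle t p qL a * Scircle t p qR (b + 1) +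
             Scircle t p qL b * Scircle t p qR (a + 1))) +
         qR * (Real.exp (-(p * t)) * (Scircle t p (qL + qR) a + Scircle t p (qL + qR) b) -
            (Scircle t p qL (a + 1) * Scircle t p qR b +
             Scircle t p qL (b + 1) * Scircle t p qR a)))) t := by
  have hyA := Scircle_ode p (qL + qR) t hp a (fun j h1 h2 => hcS j h1 (by omega))
  have hyB := Scircle_ode p (qL + qR) t hp b (fun j h1 h2 => hcS j h1 (by omega))
  have haA := Scircle_ode p qL t hp a (fun j h1 h2 => hcL j h1 (by omega))
  have haB := Scircle_ode p qL t hp b (fun j h1 h2 => hcL j h1 (by omega))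
  have hbA := Scircle_ode p qR t hp a (fun j h1 h2 => hcR j h1 (by omega))
  have hbB := Scircle_ode p qR t hp b (fun j h1 h2 => hcR j h1 (by omega))
  have hEd : HasDerivAt (fun s : ℝ => Real.exp (p * s)) (p * Real.exp (p * t)) t := by
    simpa [mul_comm] using ((hasDerivAt_id t).const_mul p).exp
  have hprod := hEd.fun_mul (((haA.fun_mul hbB).fun_add (haB.fun_mul hbA)))
  have := (hyA.fun_add hyB).fun_sub hprod
  refine this.congr_deriv ?_
  symm
  have hE := exp_mul_exp_neg (p * t)
  set E := Real.exp (p * t)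
  set ep := Real.exp (-(p * t))
  unfold Phi
  linear_combination (qL * (Scircle t p qL a * Scircle t p qR (b + 1) +
      Scircle t p qL b * Scircle t p qR (a + 1)) +
    qR * (Scircle t p qL (a + 1) * Scircle t p qR b +
      Scircle t p qL (b + 1) * Scircle t p qR a)) * hE

lemma Phi_main (p qL qR : ℝ) (hp : 0 < p) (hL : 0 < qL) (hR : 0 < qR) (N : ℕ)
    (hcL : ∀ j : ℕ, 1 ≤ j → j ≤ N → qL ≠ (j : ℝ) * p)
    (hcR : ∀ j : ℕ, 1 ≤ j → j ≤ N → qR ≠ (j : ℝ) * p)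
    (hcS : ∀ j : ℕ, 1 ≤ j → j ≤ N → qL + qR ≠ (j : ℝ) * p) :
    ∀ s m n : ℕ, m + n = s → 1 ≤ m → m ≤ n → n ≤ N + 1 →
      (∀ t, 0 ≤ t → 0 ≤ Phi p qL qR m n t) ∧
      (2 ≤ n → ∀ t, 0 < t → 0 < Phi p qL qR m n t) := by
  intro s
  induction s using Nat.strong_induction_on with
  | _ s IH =>
  intro m n hs hm hmn hn
  obtain ⟨a, rfl⟩ : ∃ a, m = a + 1 := ⟨m - 1, by omega⟩
  obtain ⟨b, rfl⟩ : ∃ b, n = b + 1 := ⟨n - 1, by omega⟩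
  rcases Nat.eq_zero_or_pos b with rfl | hb1
  · obtain rfl : a = 0 := by omega
    exact ⟨fun t _ => le_of_eq (Phi_one_one p qL qR t).symm, fun h2 => by omega⟩
  have hab : a ≤ b := by omega
  have hbN : b ≤ N := by omega
  have haN : a ≤ N := by omega
  set F : ℝ → ℝ := Phi p qL qR (a + 1) (b + 1) with hF
  set H : ℝ → ℝ := fun t =>
    qL * (Real.exp (-(p * t)) * (Scircle t p (qL + qR) a + Scircle t p (qL + qR) b) -
        (Scircle t p qL a * Scircle t p qR (b + 1) +
         Scircle t p qL b * Scircle t p qR (a + 1))) +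
    qR * (Real.exp (-(p * t)) * (Scircle t p (qL + qR) a + Scircle t p (qL + qR) b) -
        (Scircle t p qL (a + 1) * Scircle t p qR b +
         Scircle t p qL (b + 1) * Scircle t p qR a)) with hHdef
  have hd : ∀ t, HasDerivAt F (-((p + (qL + qR)) * F t) + H t) t :=
    fun t => Phi_deriv p qL qR (ne_of_gt hp) a b N haN hbN hcL hcR hcS t
  have hF0 : F 0 = 0 := Phi_zero p qL qR (a + 1) (b + 1)
  have hHlow : ∀ u, 0 ≤ u → 0 ≤ H u ∧ (0 < u → 0 < H u) := by
    intro u hu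
    have hE := exp_mul_exp_neg (p * u)
    have hep0 : 0 < Real.exp (-(p * u)) := Real.exp_pos _
    have hep1 : Real.exp (-(p * u)) ≤ 1 := Real.exp_le_one_iff.mpr (by nlinarith)
    have hBRb0 : 0 < Scircle u p qR b := Scircle_pos p qR hp hR N hcR b (by omega) u hu
    have hALb0 : 0 < Scircle u p qL b := Scircle_pos p qL hp hL N hcL b (by omega) u hu
    have hALa0 : 0 < Scircle u p qL a := Scircle_pos p qL hp hL N hcL a (by omega) u hu
    have hBRa0 : 0 < Scircle u p qR a := Scircle_pos p qR hp hR N hcR a (by omega) u hu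
    have hBRdec : Scircle u p qR (b + 1) ≤ Scircle u p qR b :=
      (Scircle_succ_le p qR hp hR N hcR b (by omega)).1 u hu
    have hALdec : Scircle u p qL (b + 1) ≤ Scircle u p qL b :=
      (Scircle_succ_le p qL hp hL N hcL b (by omega)).1 u hu
    have hBRdecA : Scircle u p qR (a + 1) ≤ Scircle u p qR a :=
      (Scircle_succ_le p qR hp hR N hcR a (by omega)).1 u hu
    have hALdecA : Scircle u p qL (a + 1) ≤ Scircle u p qL a :=
      (Scircle_succ_le p qL hp hL N hcL a (by omega)).1 u hu
    have hBRstrict : 0 < u → Scircle u p qR (b + 1) < Scircle u p qR b :=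
      fun hu' => (Scircle_succ_le p qR hp hR N hcR b (by omega)).2 u hu'
    rcases Nat.eq_zero_or_pos a with rfl | ha1
    · -- boundary case m = 1
      have hΦ' : 0 ≤ Phi p qL qR 1 b u :=
        (IH (1 + b) (by omega) 1 b rfl le_rfl hb1 (by omega)).1 u hu
      have hALble : Scircle u p qL b ≤ Real.exp (-(p * u)) :=
        Scircle_le_exp p qL hp hL N hcL b hb1 (by omega) u hu
      have hBRble : Scircle u p qR b ≤ Real.exp (-(p * u)) :=
        Scircle_le_exp p qR hp hR N hcR b hb1 (by omega) u hu
      have hred : Phi p qL qR 1 b u = Real.exp (-(p * u)) + Scircle u p (qL + qR) b -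
          (Scircle u p qR b + Scircle u p qL b) := by
        unfold Phi
        rw [Scircle_one, Scircle_one, Scircle_one]
        linear_combination (-(Scircle u p qR b + Scircle u p qL b)) * hE
      rw [hred] at hΦ'
      have t1 : Scircle u p qR b - Scircle u p qR (b + 1) ≤
          Real.exp (-(p * u)) * (Scircle u p (qL + qR) 0 + Scircle u p (qL + qR) b) -
          (Scircle u p qL 0 * Scircle u p qR (b + 1) +
           Scircle u p qL b * Scircle u p qR (0 + 1)) := by
        rw [Scircle_zero_nodes, Scircle_zero_nodes, zero_add, Scircle_one]
        nlinarith [mul_nonneg hep0.le hΦ',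
          mul_nonneg (sub_nonneg.mpr hep1) (sub_nonneg.mpr hBRble)]
      have t2 : 0 ≤
          Real.exp (-(p * u)) * (Scircle u p (qL + qR) 0 + Scircle u p (qL + qR) b) -
          (Scircle u p qL (0 + 1) * Scircle u p qR b +
           Scircle u p qL (b + 1) * Scircle u p qR 0) := by
        rw [Scircle_zero_nodes, Scircle_zero_nodes, zero_add, Scircle_one]
        nlinarith [mul_nonneg hep0.le hΦ',
          mul_nonneg (sub_nonneg.mpr hep1) (sub_nonneg.mpr hALble)]
      constructor
      · simp only [hHdef]
        have h1 := mul_le_mul_of_nonneg_left t1 hL.le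
        have h2 := mul_nonneg hR.le t2
        linarith [mul_nonneg hL.le (sub_nonneg.mpr hBRdec)]
      · intro hu'
        simp only [hHdef]
        have h1 := mul_le_mul_of_nonneg_left t1 hL.le
        have h2 := mul_nonneg hR.le t2
        linarith [mul_pos hL (sub_pos.mpr (hBRstrict hu'))]
    · -- interior case m ≥ 2
      have hΦ' : 0 ≤ Phi p qL qR a b u :=
        (IH (a + b) (by omega) a b rfl ha1 hab (by omega)).1 u hu
      have e0 : Real.exp (-(p * u)) * Phi p qL qR a b u =
          Real.exp (-(p * u)) * (Scircle u p (qL + qR) a + Scircle u p (qL + qR) b) -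
          (Scircle u p qL a * Scircle u p qR b + Scircle u p qL b * Scircle u p qR a) := by
        unfold Phi
        linear_combination (-(Scircle u p qL a * Scircle u p qR b +
          Scircle u p qL b * Scircle u p qR a)) * hE
      have t1 : Scircle u p qL a * (Scircle u p qR b - Scircle u p qR (b + 1)) ≤
          Real.exp (-(p * u)) * (Scircle u p (qL + qR) a + Scircle u p (qL + qR) b) -
          (Scircle u p qL a * Scircle u p qR (b + 1) +
           Scircle u p qL b * Scircle u p qR (a + 1)) := by
        linarith [e0, mul_nonneg hep0.le hΦ',
          mul_nonneg hALb0.le (sub_nonneg.mpr hBRdecA)]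
      have t2 : 0 ≤
          Real.exp (-(p * u)) * (Scircle u p (qL + qR) a + Scircle u p (qL + qR) b) -
          (Scircle u p qL (a + 1) * Scircle u p qR b +
           Scircle u p qL (b + 1) * Scircle u p qR a) := by
        linarith [e0, mul_nonneg hep0.le hΦ',
          mul_nonneg hBRb0.le (sub_nonneg.mpr hALdecA),
          mul_nonneg hBRa0.le (sub_nonneg.mpr hALdec)]
      constructor
      · simp only [hHdef]
        have h1 := mul_le_mul_of_nonneg_left t1 hL.le
        have h2 := mul_nonneg hR.le t2
        linarith [mul_nonneg hL.le (mul_nonneg hALa0.le (sub_nonneg.mpr hBRdec))]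
      · intro hu'
        simp only [hHdef]
        have h1 := mul_le_mul_of_nonneg_left t1 hL.le
        have h2 := mul_nonneg hR.le t2
        linarith [mul_pos hL (mul_pos hALa0 (sub_pos.mpr (hBRstrict hu')))]
  constructor
  · exact gron_nonneg _ F H hF0 hd (fun u hu => (hHlow u hu).1)
  · exact fun _ => gron_pos _ F H hF0 hd (fun u hu => (hHlow u hu.le).2 hu)

theorem Scircle_symmetric_pairs (p qL qR : ℝ) (hp : 0 < p) (hqL : 0 < qL) (hqR : 0 < qR)
    (M : ℕ) (hM : 2 ≤ M)
    (hnd : ∀ j : ℕ, 1 ≤ j → j ≤ M - 1 →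
      qL ≠ (j : ℝ) * p ∧ qR ≠ (j : ℝ) * p ∧ qL + qR ≠ (j : ℝ) * p)
    (k : ℕ) (hk1 : 1 ≤ k) (hkM : k ≤ M)
    (t : ℝ) (ht : 0 < t) :
    Scircle t p (qL + qR) k + Scircle t p (qL + qR) (M + 1 - k) >
      Real.exp (p * t) *
        (Scircle t p qL k * Scircle t p qR (M + 1 - k) +
          Scircle t p qL (M + 1 - k) * Scircle t p qR k) := by
  have hcL : ∀ j : ℕ, 1 ≤ j → j ≤ M - 1 → qL ≠ (j : ℝ) * p := fun j h1 h2 => (hnd j h1 h2).1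
  have hcR : ∀ j : ℕ, 1 ≤ j → j ≤ M - 1 → qR ≠ (j : ℝ) * p := fun j h1 h2 => (hnd j h1 h2).2.1
  have hcS : ∀ j : ℕ, 1 ≤ j → j ≤ M - 1 → qL + qR ≠ (j : ℝ) * p :=
    fun j h1 h2 => (hnd j h1 h2).2.2
  have key : 0 < Phi p qL qR k (M + 1 - k) t := by
    rcases le_total k (M + 1 - k) with h | h
    · exact (Phi_main p qL qR hp hqL hqR (M - 1) hcL hcR hcS (k + (M + 1 - k)) k (M + 1 - k)
        rfl hk1 h (by omega)).2 (by omega) t ht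
    · rw [Phi_symm]
      exact (Phi_main p qL qR hp hqL hqR (M - 1) hcL hcR hcS ((M + 1 - k) + k) (M + 1 - k) k
        rfl (by omega) h (by omega)).2 (by omega) t ht
  unfold Phi at key
  linarith
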